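/- For p > 0, the function tanh_p, defined as the inverse of x ↦ ∫₀ˣ dt/(1-t^p) on [0,1), coincides with sinh_p(y)/cosh_p(y), where sinh_p is the inverse of x ↦ ∫₀ˣ (1+t^p)^{-1/p} dt and cosh_p(y) = (1 + (sinh_p y)^p)^{1/p}. -/

import Mathlib

open Real Set MeasureTheory

namespace TanhpAux

lemma hA_pos {p : ℝ} (hp : 0 < p) {t : ℝ} (ht : 0 ≤ t) : (0:ℝ) < 1 + t ^ p :=
  add_pos_of_pos_of_nonneg one_pos (Real.rpow_nonneg ht p)

lemma phi_mem {p : ℝ} (hp : 0 < p) {t : ℝ} (ht : 0 ≤ t) :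
    t * (1 + t ^ p) ^ (-(1 / p)) ∈ Ico (0:ℝ) 1 := by
  have hA := hA_pos hp ht
  constructor
  · exact mul_nonneg ht (Real.rpow_nonneg hA.le _)
  · have h1 : (1 + t ^ p) ^ (-(1 / p)) = ((1 + t ^ p) ^ (1 / p))⁻¹ := by
      rw [Real.rpow_neg hA.le]
    have hB : (0:ℝ) < (1 + t ^ p) ^ (1 / p) := Real.rpow_pos_of_pos hA _
    rw [h1, ← div_eq_mul_inv, div_lt_one hB]
    have h2 : (t ^ p) ^ (1 / p) < (1 + t ^ p) ^ (1 / p) :=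
      Real.rpow_lt_rpow (Real.rpow_nonneg ht p) (by linarith) (by positivity)
    calc t = (t ^ p) ^ (1 / p) := by
            rw [← Real.rpow_mul ht, mul_one_div, div_self hp.ne', Real.rpow_one]
      _ < _ := h2

lemma cont_f {p : ℝ} (hp : 0 < p) {t : ℝ} (ht : 0 ≤ t) (q : ℝ) :
    ContinuousAt (fun s : ℝ => (1 + s ^ p) ^ q) t := by
  have h1 : ContinuousAt (fun s : ℝ => 1 + s ^ p) t :=
    continuousAt_const.add (Real.continuousAt_rpow_const t p (Or.inr hp.le))
  exact h1.rpow_const (Or.inl (hA_pos hp ht).ne')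

lemma hasDerivAt_phi {p : ℝ} (hp : 0 < p) {t : ℝ} (ht : 0 ≤ t) :
    HasDerivAt (fun s : ℝ => s * (1 + s ^ p) ^ (-(1 / p)))
      ((1 + t ^ p) ^ (-(1 / p) - 1)) t := by
  rcases eq_or_lt_of_le ht with h0 | ht'
  · subst h0
    have hval : (1 + (0:ℝ) ^ p) ^ (-(1 / p) - 1) = 1 := by
      rw [Real.zero_rpow hp.ne', add_zero, Real.one_rpow]
    rw [hval, hasDerivAt_iff_tendsto_slope]
    have hlim : Filter.Tendsto (fun s : ℝ => (1 + s ^ p) ^ (-(1 / p)))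
        (nhdsWithin (0:ℝ) {(0:ℝ)}ᶜ) (nhds 1) := by
      have h := (cont_f hp le_rfl (-(1 / p))).tendsto
      rw [show (1 + (0:ℝ) ^ p) ^ (-(1 / p)) = 1 by
        rw [Real.zero_rpow hp.ne', add_zero, Real.one_rpow]] at h
      exact h.mono_left nhdsWithin_le_nhds
    refine hlim.congr' ?_
    filter_upwards [self_mem_nhdsWithin] with s hs
    have hs0 : s ≠ 0 := hs
    rw [slope_def_field]
    simp only [zero_mul, sub_zero]
    rw [mul_comm, mul_div_assoc, div_self hs0, mul_one]
  · have hA := hA_pos hp ht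
    have h1 : HasDerivAt (fun s : ℝ => 1 + s ^ p) (p * t ^ (p - 1)) t :=
      (Real.hasDerivAt_rpow_const (Or.inl ht'.ne')).const_add 1
    have h2 : HasDerivAt (fun y : ℝ => y ^ (-(1 / p)))
        ((-(1 / p)) * (1 + t ^ p) ^ (-(1 / p) - 1)) (1 + t ^ p) :=
      Real.hasDerivAt_rpow_const (Or.inl hA.ne')
    have h3 := h2.comp t h1
    have h4 := (hasDerivAt_id t).mul h3
    have et : t * t ^ (p - 1) = t ^ p := by
      nth_rewrite 1 [← Real.rpow_one t]
      rw [← Real.rpow_add ht']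
      norm_num
    have eA : (1 + t ^ p) ^ (-(1 / p)) = (1 + t ^ p) ^ (-(1 / p) - 1) * (1 + t ^ p) := by
      nth_rewrite 1 [show -(1 / p) = (-(1 / p) - 1) + 1 by ring]
      rw [Real.rpow_add hA, Real.rpow_one]
    have hqp : (-(1 / p)) * p = -1 := by field_simp
    have halg : (1 + t ^ p) ^ (-(1 / p) - 1) =
        1 * (1 + t ^ p) ^ (-(1 / p)) +
          t * ((-(1 / p)) * (1 + t ^ p) ^ (-(1 / p) - 1) * (p * t ^ (p - 1))) := by
      have step : 1 * (1 + t ^ p) ^ (-(1 / p)) +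
          t * ((-(1 / p)) * (1 + t ^ p) ^ (-(1 / p) - 1) * (p * t ^ (p - 1)))
          = (1 + t ^ p) ^ (-(1 / p)) +
            ((-(1 / p)) * p) * (t * t ^ (p - 1)) * (1 + t ^ p) ^ (-(1 / p) - 1) := by ring
      rw [step, hqp, et, eA]
      ring
    rw [halg]
    exact h4

lemma subst_eq {p : ℝ} (hp : 0 < p) {x : ℝ} (hx : 0 ≤ x) :
    (∫ u in (0:ℝ)..(x * (1 + x ^ p) ^ (-(1 / p))), 1 / (1 - u ^ p))
      = ∫ t in (0:ℝ)..x, (1 + t ^ p) ^ (-(1 / p)) := by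
  set φ : ℝ → ℝ := fun s => s * (1 + s ^ p) ^ (-(1 / p)) with hφ
  have huIcc : uIcc (0:ℝ) x = Icc 0 x := uIcc_of_le hx
  have hder : ∀ t ∈ uIcc (0:ℝ) x, HasDerivAt φ ((1 + t ^ p) ^ (-(1 / p) - 1)) t := by
    intro t htm; rw [huIcc] at htm; exact hasDerivAt_phi hp htm.1
  have hcont' : ContinuousOn (fun t : ℝ => (1 + t ^ p) ^ (-(1 / p) - 1)) (uIcc (0:ℝ) x) := by
    rw [huIcc]
    exact fun t htm => (cont_f hp htm.1 _).continuousWithinAt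
  have hg : ContinuousOn (fun u : ℝ => 1 / (1 - u ^ p)) (φ '' uIcc (0:ℝ) x) := by
    rintro u ⟨t, htm, rfl⟩
    rw [huIcc] at htm
    have hu := phi_mem hp htm.1
    apply ContinuousAt.continuousWithinAt
    have h1 : ContinuousAt (fun s : ℝ => 1 - s ^ p) (φ t) :=
      continuousAt_const.sub (Real.continuousAt_rpow_const _ p (Or.inr hp.le))
    have h2 : 1 - (φ t) ^ p ≠ 0 := by
      have := Real.rpow_lt_one hu.1 hu.2 hp
      simp only [hφ] at this ⊢
      intro h; rw [sub_eq_zero] at h; rw [← h] at this; exact lt_irrefl _ this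
    exact ContinuousAt.div continuousAt_const h1 h2
  have key := intervalIntegral.integral_comp_smul_deriv' hder hcont' hg
  have hphi0 : φ 0 = 0 := by simp [hφ]
  rw [hphi0] at key
  rw [← key]
  apply intervalIntegral.integral_congr
  intro t htm
  rw [huIcc] at htm
  obtain ⟨ht0, -⟩ := htm
  have hA := hA_pos hp ht0
  show (1 + t ^ p) ^ (-(1 / p) - 1) • ((fun u : ℝ => 1 / (1 - u ^ p)) ∘ φ) t
      = (1 + t ^ p) ^ (-(1 / p))
  simp only [Function.comp_apply, smul_eq_mul, hφ]
  have hφp : (t * (1 + t ^ p) ^ (-(1 / p))) ^ p = t ^ p / (1 + t ^ p) := by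
    rw [Real.mul_rpow ht0 (Real.rpow_nonneg hA.le _), ← Real.rpow_mul hA.le,
      show (-(1 / p)) * p = -1 by field_simp, Real.rpow_neg_one, div_eq_mul_inv]
  rw [hφp]
  have h1 : 1 - t ^ p / (1 + t ^ p) = 1 / (1 + t ^ p) := by
    field_simp
    ring
  rw [h1, one_div_one_div, ← Real.rpow_add_one hA.ne']
  norm_num

lemma exists_F {p : ℝ} (hp : 0 < p) {y : ℝ} (hy : 0 ≤ y) :
    ∃ x : ℝ, 0 ≤ x ∧ (∫ t in (0:ℝ)..x, (1 + t ^ p) ^ (-(1 / p))) = y := by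
  set f : ℝ → ℝ := fun t => (1 + t ^ p) ^ (-(1 / p)) with hf
  set X : ℝ := Real.exp (y * 2 ^ (1 / p)) with hX
  have h2p : (0:ℝ) < 2 ^ (1 / p) := Real.rpow_pos_of_pos (by norm_num) _
  have hX1 : (1:ℝ) ≤ X := Real.one_le_exp (mul_nonneg hy h2p.le)
  have hX0 : (0:ℝ) ≤ X := by linarith
  have hfc : ∀ s : Set ℝ, s ⊆ Ici 0 → ContinuousOn f s := by
    intro s hs t htm
    exact (cont_f hp (hs htm) _).continuousWithinAt
  have hFcont : ContinuousOn (fun x => ∫ t in (0:ℝ)..x, f t) (Icc 0 X) := by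
    have hint : IntegrableOn f (uIcc 0 X) volume := by
      rw [uIcc_of_le hX0]
      exact (hfc _ (Icc_subset_Ici_self)).integrableOn_Icc
    have := intervalIntegral.continuousOn_primitive_interval hint
    rwa [uIcc_of_le hX0] at this
  have hbound : y ≤ ∫ t in (0:ℝ)..X, f t := by
    have hint1 : IntervalIntegrable f volume 0 1 :=
      (hfc _ (by rw [uIcc_of_le zero_le_one]; exact Icc_subset_Ici_self)).intervalIntegrable
    have hint2 : IntervalIntegrable f volume 1 X :=
      (hfc _ (by rw [uIcc_of_le hX1]
                 exact (Icc_subset_Ici_self).trans (Ici_subset_Ici.mpr zero_le_one))).intervalIntegrable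
    have hintg : IntervalIntegrable (fun t : ℝ => (2 ^ (1 / p) * t)⁻¹) volume 1 X := by
      apply ContinuousOn.intervalIntegrable
      apply ContinuousOn.inv₀ (Continuous.continuousOn (by continuity))
      intro t htm
      rw [uIcc_of_le hX1] at htm
      have : (0:ℝ) < t := lt_of_lt_of_le one_pos htm.1
      positivity
    have hsplit : (∫ t in (0:ℝ)..X, f t)
        = (∫ t in (0:ℝ)..1, f t) + ∫ t in (1:ℝ)..X, f t :=
      (intervalIntegral.integral_add_adjacent_intervals hint1 hint2).symm
    have h01 : 0 ≤ ∫ t in (0:ℝ)..1, f t := by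
      apply intervalIntegral.integral_nonneg zero_le_one
      intro t htm
      exact Real.rpow_nonneg (hA_pos hp htm.1).le _
    have hcomp : (∫ t in (1:ℝ)..X, (2 ^ (1 / p) * t)⁻¹) ≤ ∫ t in (1:ℝ)..X, f t := by
      apply intervalIntegral.integral_mono_on hX1 hintg hint2
      intro t htm
      have ht1 : 1 ≤ t := htm.1
      have ht0 : (0:ℝ) < t := lt_of_lt_of_le one_pos ht1
      have h1 : (1:ℝ) ≤ t ^ p := by
        calc (1:ℝ) = 1 ^ p := (Real.one_rpow p).symm
          _ ≤ t ^ p := Real.rpow_le_rpow zero_le_one ht1 hp.le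
      have h2 : (1 + t ^ p) ^ (1 / p) ≤ 2 ^ (1 / p) * t := by
        calc (1 + t ^ p) ^ (1 / p) ≤ (2 * t ^ p) ^ (1 / p) :=
              Real.rpow_le_rpow (by positivity) (by linarith) (by positivity)
          _ = 2 ^ (1 / p) * (t ^ p) ^ (1 / p) :=
              Real.mul_rpow (by norm_num) (by positivity)
          _ = 2 ^ (1 / p) * t := by
              rw [← Real.rpow_mul ht0.le, mul_one_div, div_self hp.ne', Real.rpow_one]
      have h3 : f t = ((1 + t ^ p) ^ (1 / p))⁻¹ := by
        rw [hf]
        simp only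
        rw [Real.rpow_neg (hA_pos hp ht0.le).le]
      rw [h3]
      exact inv_anti₀ (Real.rpow_pos_of_pos (hA_pos hp ht0.le) _) h2
    have hlog : (∫ t in (1:ℝ)..X, (2 ^ (1 / p) * t)⁻¹) = (2 ^ (1 / p) : ℝ)⁻¹ * Real.log X := by
      have hEq : EqOn (fun t : ℝ => (2 ^ (1 / p) * t)⁻¹)
          (fun t : ℝ => (2 ^ (1 / p) : ℝ)⁻¹ * (1 / t)) (uIcc 1 X) := by
        intro t _
        show (2 ^ (1 / p) * t)⁻¹ = (2 ^ (1 / p) : ℝ)⁻¹ * (1 / t)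
        rw [mul_inv]
        ring
      rw [intervalIntegral.integral_congr hEq, intervalIntegral.integral_const_mul,
        integral_one_div_of_pos one_pos (lt_of_lt_of_le one_pos hX1), div_one]
    have hlogX : Real.log X = y * 2 ^ (1 / p) := Real.log_exp _
    have : (2 ^ (1 / p) : ℝ)⁻¹ * Real.log X = y := by
      rw [hlogX]
      field_simp
    linarith [hcomp, h01, hsplit.ge, hlog ▸ hcomp]
  have hmem : y ∈ Icc ((fun x => ∫ t in (0:ℝ)..x, f t) 0) ((fun x => ∫ t in (0:ℝ)..x, f t) X) := by
    constructor
    · simp only [intervalIntegral.integral_same]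
      exact hy
    · exact hbound
  obtain ⟨x, hxm, hxe⟩ := intermediate_value_Icc hX0 hFcont hmem
  exact ⟨x, hxm.1, hxe⟩

end TanhpAux

/-- For `p > 0`, `tanh_p` (inverse of `x ↦ ∫₀ˣ dt/(1-t^p)` on `[0,1)`) coincides with
`sinh_p / cosh_p`, where `sinh_p` is the inverse of `x ↦ ∫₀ˣ (1+t^p)^(-1/p) dt`
and `cosh_p y = (1 + (sinh_p y)^p)^(1/p)`. -/
theorem tanhp_eq_sinhp_div_coshp (p : ℝ) (hp : 0 < p)
    (sinhp tanhp : ℝ → ℝ)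
    (hsinh : ∀ x : ℝ, 0 ≤ x → sinhp (∫ t in (0:ℝ)..x, (1 + t ^ p) ^ (-(1 / p))) = x)
    (htanh : ∀ x ∈ Set.Ico (0:ℝ) 1, tanhp (∫ t in (0:ℝ)..x, 1 / (1 - t ^ p)) = x) :
    ∀ y : ℝ, 0 ≤ y → tanhp y = sinhp y / (1 + (sinhp y) ^ p) ^ (1 / p) := by
  intro y hy
  obtain ⟨x, hx0, hFx⟩ := TanhpAux.exists_F hp hy
  have hsy : sinhp y = x := by rw [← hFx]; exact hsinh x hx0
  have hu : x * (1 + x ^ p) ^ (-(1 / p)) ∈ Set.Ico (0:ℝ) 1 := TanhpAux.phi_mem hp hx0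
  have hG : (∫ t in (0:ℝ)..(x * (1 + x ^ p) ^ (-(1 / p))), 1 / (1 - t ^ p)) = y := by
    rw [TanhpAux.subst_eq hp hx0, hFx]
  have ht : tanhp y = x * (1 + x ^ p) ^ (-(1 / p)) := by
    rw [← hG]; exact htanh _ hu
  rw [ht, hsy, Real.rpow_neg (TanhpAux.hA_pos hp hx0).le]
  exact (div_eq_mul_inv x _).symm
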